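/- arXiv:1301.0031 — 6 statements merged into one kernel-verified Lean document; each statement's English description precedes it below -/
import Mathlib

section
/- Let A and A' be categories, T an endofunctor of A which is an equivalence (autofunctor), T' an endofunctor of A' which is an equivalence (autofunctor), and F : A ⥤ A', G : A' ⥤ A functors with an adjunction F ⊣ G having unit ε : 𝟭_A ⟶ F ⋙ G and counit η : G ⋙ F ⟶ 𝟭_{A'}. Let α : T ⋙ F ⟶ F ⋙ T' be a natural transformation, and let β : G ⋙ T ⟶ T' ⋙ G be the composite (whiskering of ε) : G ⋙ T ⟶ G ⋙ T ⋙ F ⋙ G, followed by (G-α-G whiskering) : G ⋙ T ⋙ F ⋙ G ⟶ G ⋙ F ⋙ T' ⋙ G, followed by (whiskering of η) : G ⋙ F ⋙ T' ⋙ G ⟶ T' ⋙ G. If β is a natural isomorphism, then α is a natural isomorphism. -/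
open CategoryTheory

/-- Lemma `LemAdPrep.(3°)`: given an adjunction `F ⊣ G` with unit `ε` and counit `η`,
autofunctors (equivalences) `T` of `A` and `T'` of `A'`, a natural transformation
`α : T ⋙ F ⟶ F ⋙ T'`, and `β : G ⋙ T ⟶ T' ⋙ G` defined as the composite
`G ⋙ T ⟶ G ⋙ T ⋙ F ⋙ G ⟶ G ⋙ F ⋙ T' ⋙ G ⟶ T' ⋙ G`:
if `β` is a natural isomorphism, then so is `α`. -/
theorem stmt_4 {A : Type*} [Category A] {A' : Type*} [Category A']
    (T : A ⥤ A) (T' : A' ⥤ A') [T.IsEquivalence] [T'.IsEquivalence]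
    (F : A ⥤ A') (G : A' ⥤ A)
    (adj : F ⊣ G) (α : T ⋙ F ⟶ F ⋙ T')
    (β : G ⋙ T ⟶ T' ⋙ G)
    (hβ : β = Functor.whiskerLeft (G ⋙ T) adj.unit ≫
      Functor.whiskerLeft G (Functor.whiskerRight α G) ≫ Functor.whiskerRight adj.counit (T' ⋙ G))
    (hβiso : IsIso β) :
    IsIso α := by
  let eT := T.asEquivalence
  let eT' := T'.asEquivalence
  let adjT : T ⊣ eT.inverse := eT.toAdjunction
  let adjT' : T' ⊣ eT'.inverse := eT'.toAdjunction
  have hβ' : β = mateEquiv adj adj α := by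
    rw [hβ]
    ext x
    simp [mateEquiv]
  have h1 : IsIso (mateEquiv adjT' adjT β) := by
    have : IsIso adjT.unit := by
      show IsIso eT.unitIso.hom; infer_instance
    have : IsIso adjT'.counit := by
      show IsIso eT'.counitIso.hom; infer_instance
    simp only [mateEquiv, Equiv.coe_fn_mk]
    infer_instance
  rw [hβ'] at h1
  have h2 : IsIso (conjugateEquiv (adj.comp adjT') (adjT.comp adj) α) := by
    rw [← iterated_mateEquiv_conjugateEquiv adj adj adjT adjT' α]; exact h1
  exact conjugateEquiv_of_iso (adj.comp adjT') (adjT.comp adj) α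
end

section
/- Let C be a category and M a multiplicative system in C, with localization functor L : C ⥤ C_M. Then for morphisms s : X' ⟶ X and t : Y' ⟶ Y belonging to M and any morphism f : X' ⟶ Y' of C, the composite (L s)⁻¹ ≫ L f ≫ (L t)⁻¹ : L X ⟶ L Y is an isomorphism in C_M if and only if f belongs to M. In particular, for any morphism f of C, L f is an isomorphism if and only if f ∈ M. -/
open CategoryTheory

/-- A multiplicative system in the sense of Definition `DefAppMult` (Fr1–Fr4). -/
structure IsMultiplicativeSystem {C : Type*} [Category C] (M : MorphismProperty C) : Prop where
  fr1 : ∀ X : C, M (𝟙 X)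
  fr2 : ∀ ⦃X Y Z W : C⦄ (f : X ⟶ Y) (g : Y ⟶ Z) (h : Z ⟶ W),
    M (f ≫ g) → M (g ≫ h) → M f ∧ M g ∧ M h ∧ M (f ≫ g ≫ h)
  fr3 : ∀ ⦃X Y : C⦄ (f g : X ⟶ Y),
    (∃ (X' : C) (s : X' ⟶ X), M s ∧ s ≫ f = s ≫ g) ↔
    (∃ (Y' : C) (t : Y ⟶ Y'), M t ∧ f ≫ t = g ≫ t)
  fr4 : ∀ ⦃X Y X' : C⦄ (s : X ⟶ Y) (f : X ⟶ X'), M s →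
    ∃ (Y' : C) (s' : X' ⟶ Y') (f' : Y ⟶ Y'), M s' ∧ s ≫ f' = f ≫ s'
  fr4' : ∀ ⦃Y Y' X' : C⦄ (f' : Y ⟶ Y') (s' : X' ⟶ Y'), M s' →
    ∃ (X : C) (s : X ⟶ Y) (f : X ⟶ X'), M s ∧ s ≫ f' = f ≫ s'

namespace IsMultiplicativeSystem

variable {C : Type*} [Category C] {M : MorphismProperty C}

lemma comp_mem' (hM : IsMultiplicativeSystem M) {X Y Z : C} (f : X ⟶ Y) (g : Y ⟶ Z)
    (hf : M f) (hg : M g) : M (f ≫ g) := by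
  have := hM.fr2 f (𝟙 Y) g (by simpa using hf) (by simpa using hg)
  simpa using this.2.2.2

lemma isMultiplicative (hM : IsMultiplicativeSystem M) : M.IsMultiplicative where
  id_mem := hM.fr1
  comp_mem f g hf hg := hM.comp_mem' f g hf hg

lemma hasLeftCalculus (hM : IsMultiplicativeSystem M) : M.HasLeftCalculusOfFractions := by
  have := hM.isMultiplicative
  exact
    { exists_leftFraction := fun X Y φ => by
        obtain ⟨Y', s', f', hs', fac⟩ := hM.fr4 φ.s φ.f φ.hs
        exact ⟨MorphismProperty.LeftFraction.mk f' s' hs', fac.symm⟩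
      ext := fun X' X Y f₁ f₂ s hs h => by
        obtain ⟨Y', t, ht, h'⟩ := (hM.fr3 f₁ f₂).mp ⟨X', s, hs, h⟩
        exact ⟨Y', t, ht, h'⟩ }

lemma exists_comp_mem (hM : IsMultiplicativeSystem M) {X Y : C} (f : X ⟶ Y)
    (h : IsIso (M.Q.map f)) : ∃ (Z : C) (a : Y ⟶ Z), M (f ≫ a) := by
  have := hM.hasLeftCalculus
  obtain ⟨ψ, hψ⟩ := Localization.exists_leftFraction M.Q M (inv (M.Q.map f))
  have hψs := Localization.inverts M.Q M ψ.s ψ.hs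
  have h1 : M.Q.map (f ≫ ψ.f) = M.Q.map ψ.s := by
    have h2 := IsIso.hom_inv_id (M.Q.map f)
    rw [hψ] at h2
    have h3 : M.Q.map f ≫ M.Q.map ψ.f ≫ inv (M.Q.map ψ.s) = 𝟙 _ := h2
    rw [Functor.map_comp, ← cancel_mono (inv (M.Q.map ψ.s))]
    simpa using h3
  obtain ⟨Z, u, hu, fac⟩ := (MorphismProperty.map_eq_iff_postcomp M.Q M (f ≫ ψ.f) ψ.s).mp h1
  refine ⟨Z, ψ.f ≫ u, ?_⟩
  rw [← Category.assoc, fac]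
  exact hM.comp_mem' ψ.s u ψ.hs hu

lemma mem_of_isIso (hM : IsMultiplicativeSystem M) {X Y : C} (f : X ⟶ Y)
    (h : IsIso (M.Q.map f)) : M f := by
  obtain ⟨Z, a, hfa⟩ := hM.exists_comp_mem f h
  have ha : IsIso (M.Q.map a) := by
    have h1 : IsIso (M.Q.map (f ≫ a)) := Localization.inverts M.Q M _ hfa
    rw [Functor.map_comp] at h1
    exact IsIso.of_isIso_comp_left (M.Q.map f) (M.Q.map a)
  obtain ⟨W', b, hab⟩ := hM.exists_comp_mem a ha
  exact (hM.fr2 f a b hfa hab).1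

end IsMultiplicativeSystem

/-- Remark `RemA0`: for a multiplicative system `M` in `C` with localisation functor
`L = M.Q : C ⥤ C_M`, given `s : X' ⟶ X` and `t : Y ⟶ Y'` in `M` and `f : X' ⟶ Y'`,
the double fraction `(L s)⁻¹ ≫ L f ≫ (L t)⁻¹ : L X ⟶ L Y` is an isomorphism if and
only if `f ∈ M`; in particular `L f` is an isomorphism if and only if `f ∈ M`. -/
theorem stmt_11 {C : Type*} [Category C] (M : MorphismProperty C)
    (hM : IsMultiplicativeSystem M) :
    (∀ ⦃X' X Y' Y : C⦄ (s : X' ⟶ X) (t : Y ⟶ Y') (f : X' ⟶ Y')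
      (hs : M s) (ht : M t),
      have : IsIso (M.Q.map s) := Localization.inverts M.Q M s hs
      have : IsIso (M.Q.map t) := Localization.inverts M.Q M t ht
      (IsIso (inv (M.Q.map s) ≫ M.Q.map f ≫ inv (M.Q.map t)) ↔ M f)) ∧
    (∀ ⦃X Y : C⦄ (f : X ⟶ Y), IsIso (M.Q.map f) ↔ M f) := by
  have key : ∀ ⦃X Y : C⦄ (f : X ⟶ Y), IsIso (M.Q.map f) ↔ M f := fun X Y f =>
    ⟨hM.mem_of_isIso f, fun hf => Localization.inverts M.Q M f hf⟩
  refine ⟨fun X' X Y' Y s t f hs ht => ?_, key⟩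
  haveI := Localization.inverts M.Q M s hs
  haveI := Localization.inverts M.Q M t ht
  have equiv : IsIso (inv (M.Q.map s) ≫ M.Q.map f ≫ inv (M.Q.map t)) ↔
      IsIso (M.Q.map f) := by
    constructor
    · intro h
      have h2 : M.Q.map f =
          M.Q.map s ≫ (inv (M.Q.map s) ≫ M.Q.map f ≫ inv (M.Q.map t)) ≫ M.Q.map t := by
        simp
      rw [h2]
      infer_instance
    · intro h
      infer_instance
  exact equiv.trans (key f)
end

section
/- Let C be a category and M a multiplicative system in C, with localization functor L : C ⥤ C_M. Then for parallel morphisms f, g : X ⟶ Y in C, the following are equivalent: (i) L f = L g in C_M; (ii) there exists t : Y ⟶ Y' in M such that f ≫ t = g ≫ t in C; (iii) there exists s : X' ⟶ X in M such that s ≫ f = s ≫ g in C. -/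
open CategoryTheory

lemma IsMultiplicativeSystem.isMultiplicative_s12 {C : Type*} [Category C]
    {M : MorphismProperty C} (hM : IsMultiplicativeSystem M) : M.IsMultiplicative where
  id_mem := hM.fr1
  comp_mem f g hf hg := by
    have := hM.fr2 f (𝟙 _) g (by simpa using hf) (by simpa using hg)
    simpa using this.2.2.2

lemma IsMultiplicativeSystem.hasLeft {C : Type*} [Category C]
    {M : MorphismProperty C} (hM : IsMultiplicativeSystem M) :
    M.HasLeftCalculusOfFractions :=
  letI := hM.isMultiplicative_s12
  { exists_leftFraction := fun X Y φ => by
      obtain ⟨Y', s', f', hs', fac⟩ := hM.fr4 φ.s φ.f φ.hs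
      exact ⟨MorphismProperty.LeftFraction.mk f' s' hs', fac.symm⟩
    ext := fun X' X Y f₁ f₂ s hs h => by
      obtain ⟨Y', t, ht, fac⟩ := (hM.fr3 f₁ f₂).1 ⟨X', s, hs, h⟩
      exact ⟨Y', t, ht, fac⟩ }

lemma IsMultiplicativeSystem.hasRight {C : Type*} [Category C]
    {M : MorphismProperty C} (hM : IsMultiplicativeSystem M) :
    M.HasRightCalculusOfFractions :=
  letI := hM.isMultiplicative_s12
  { exists_rightFraction := fun X Y φ => by
      obtain ⟨X', s, f, hs, fac⟩ := hM.fr4' φ.f φ.s φ.hs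
      exact ⟨MorphismProperty.RightFraction.mk s hs f, fac⟩
    ext := fun X Y Y' f₁ f₂ s hs h => by
      obtain ⟨X', t, ht, fac⟩ := (hM.fr3 f₁ f₂).2 ⟨Y', s, hs, h⟩
      exact ⟨X', t, ht, fac⟩ }

/-- Remark `RemA0_1`: for a multiplicative system `M` in `C` with localisation functor
`L = M.Q : C ⥤ C_M` and parallel morphisms `f, g : X ⟶ Y` in `C`, the following are
equivalent: (i) `L f = L g`; (ii) there is `t : Y ⟶ Y'` in `M` with `f ≫ t = g ≫ t`;
(iii) there is `s : X' ⟶ X` in `M` with `s ≫ f = s ≫ g`. -/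
theorem stmt_12 {C : Type*} [Category C] (M : MorphismProperty C)
    (hM : IsMultiplicativeSystem M) {X Y : C} (f g : X ⟶ Y) :
    (M.Q.map f = M.Q.map g ↔ ∃ (Y' : C) (t : Y ⟶ Y'), M t ∧ f ≫ t = g ≫ t) ∧
    (M.Q.map f = M.Q.map g ↔ ∃ (X' : C) (s : X' ⟶ X), M s ∧ s ≫ f = s ≫ g) := by
  letI := hM.isMultiplicative_s12
  haveI := hM.hasLeft
  haveI := hM.hasRight
  constructor
  · rw [MorphismProperty.map_eq_iff_postcomp (W := M) M.Q f g]
    exact ⟨fun ⟨Z, s, hs, h⟩ => ⟨Z, s, hs, h⟩, fun ⟨Z, s, hs, h⟩ => ⟨Z, s, hs, h⟩⟩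
  · rw [MorphismProperty.map_eq_iff_precomp (W := M) M.Q f g]
    exact ⟨fun ⟨Z, s, hs, h⟩ => ⟨Z, s, hs, h⟩, fun ⟨Z, s, hs, h⟩ => ⟨Z, s, hs, h⟩⟩
end

section
/- Let C be a category and M a multiplicative system in C, with localization functor L : C ⥤ C_M. For every n ≥ 0, the induced functor on diagram categories, from the category of diagrams in C indexed by the linearly ordered poset {1 < 2 < ⋯ < n} to the category of diagrams in C_M indexed by the same poset (given by postcomposition with L), is 1-epimorphic: for every category D, precomposition with this induced functor gives a fully faithful functor from the category of functors (diagrams in C_M indexed by {1<⋯<n}) ⥤ D to the category of functors (diagrams in C indexed by {1<⋯<n}) ⥤ D. -/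
open CategoryTheory

lemma IsMultiplicativeSystem.hasRightCalculusOfFractions {C : Type*} [Category C]
    {M : MorphismProperty C} (hM : IsMultiplicativeSystem M) :
    M.HasRightCalculusOfFractions where
  toIsMultiplicative :=
    { id_mem := hM.fr1
      comp_mem := fun f g hf hg => by
        have h := hM.fr2 f (𝟙 _) g (by simpa using hf) (by simpa using hg)
        simpa using h.2.2.2 }
  exists_rightFraction X Y φ := by
    obtain ⟨X₀, s, f, hs, fac⟩ := hM.fr4' φ.f φ.s φ.hs
    exact ⟨MorphismProperty.RightFraction.mk s hs f, fac⟩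
  ext X Y Y' f₁ f₂ s hs h := by
    obtain ⟨X', t, ht, fac⟩ := (hM.fr3 f₁ f₂).2 ⟨Y', s, hs, h⟩
    exact ⟨X', t, ht, fac⟩

namespace StmtAux

section Generic
variable {A B D : Type*} [Category A] [Category B] [Category D]

lemma key_nat_generic (G : A ⥤ B) (H₁ H₂ : B ⥤ D) (τ : G ⋙ H₁ ⟶ G ⋙ H₂)
    {F F' : A} (u : G.obj F ⟶ G.obj F') {F'' : A} (s : F'' ⟶ F) (g : F'' ⟶ F')
    [IsIso (G.map s)] (hu : G.map s ≫ u = G.map g) :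
    H₁.map u ≫ τ.app F' = τ.app F ≫ H₂.map u := by
  have hu' : u = inv (G.map s) ≫ G.map g := by
    rw [← hu, IsIso.inv_hom_id_assoc]
  have nat_s := τ.naturality s
  have nat_g := τ.naturality g
  dsimp at nat_s nat_g
  rw [hu', H₁.map_comp, H₂.map_comp, Category.assoc, nat_g, ← Category.assoc,
    ← Category.assoc]
  congr 1
  rw [H₁.map_inv, H₂.map_inv, IsIso.eq_comp_inv, Category.assoc, IsIso.inv_comp_eq]
  exact nat_s.symm

lemma full_faithful_of_essSurj_of_key (G : A ⥤ B) [G.EssSurj]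
    (key : ∀ (H₁ H₂ : B ⥤ D) (τ : G ⋙ H₁ ⟶ G ⋙ H₂) (F F' : A)
      (u : G.obj F ⟶ G.obj F'), H₁.map u ≫ τ.app F' = τ.app F ≫ H₂.map u) :
    ((Functor.whiskeringLeft A B D).obj G).Full ∧ ((Functor.whiskeringLeft A B D).obj G).Faithful := by
  constructor
  · refine ⟨fun {H₁ H₂} τ => ?_⟩
    refine ⟨⟨fun X => H₁.map (G.objObjPreimageIso X).inv ≫
      τ.app (G.objPreimage X) ≫ H₂.map (G.objObjPreimageIso X).hom, ?_⟩, ?_⟩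
    · intro X Y v
      have k := key H₁ H₂ τ (G.objPreimage X) (G.objPreimage Y)
        ((G.objObjPreimageIso X).hom ≫ v ≫ (G.objObjPreimageIso Y).inv)
      dsimp
      apply (cancel_epi (H₁.map (G.objObjPreimageIso X).hom)).1
      simp only [Functor.map_comp, Category.assoc] at k ⊢
      rw [reassoc_of% k]
      simp
    · apply NatTrans.ext
      funext F
      have k := key H₁ H₂ τ (G.objPreimage (G.obj F)) F
        (G.objObjPreimageIso (G.obj F)).hom
      dsimp
      rw [← k, ← Category.assoc, ← H₁.map_comp, Iso.inv_hom_id, H₁.map_id,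
        Category.id_comp]
  · refine ⟨fun {H₁ H₂} α β h => ?_⟩
    apply NatTrans.ext
    funext X
    have hα := α.naturality (G.objObjPreimageIso X).hom
    have hβ := β.naturality (G.objObjPreimageIso X).hom
    have happ : α.app (G.obj (G.objPreimage X)) = β.app (G.obj (G.objPreimage X)) :=
      congrArg (fun (γ : G ⋙ H₁ ⟶ G ⋙ H₂) => γ.app (G.objPreimage X)) h
    have : H₁.map (G.objObjPreimageIso X).hom ≫ α.app X =
        H₁.map (G.objObjPreimageIso X).hom ≫ β.app X := by
      rw [hα, hβ, happ]
    exact (cancel_epi (H₁.map (G.objObjPreimageIso X).hom)).1 this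

end Generic

variable {C : Type*} [Category C] (W : MorphismProperty C) [W.HasRightCalculusOfFractions]

open ComposableArrows in
lemma df_CA : ∀ (m : ℕ) (F F' : ComposableArrows C m)
    (u : (W.Q.mapComposableArrows m).obj F ⟶ (W.Q.mapComposableArrows m).obj F'),
    ∃ (F'' : ComposableArrows C m) (s : F'' ⟶ F) (g : F'' ⟶ F'),
      (∀ i, W (s.app i)) ∧ ∀ i, W.Q.map (s.app i) ≫ u.app i = W.Q.map (g.app i) := by
  intro m
  induction m with
  | zero =>
    intro F F' u
    obtain ⟨φ, hφ⟩ := Localization.exists_rightFraction W.Q W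
      (show W.Q.obj (F.obj 0) ⟶ W.Q.obj (F'.obj 0) from u.app 0)
    refine ⟨mk₀ φ.X', homMk₀ φ.s, homMk₀ φ.f, ?_, ?_⟩
    · intro i
      fin_cases i
      exact φ.hs
    · intro i
      fin_cases i
      have hφ'' : u.app 0 = φ.map W.Q (Localization.inverts W.Q W) := hφ
      show W.Q.map φ.s ≫ u.app 0 = W.Q.map φ.f
      rw [hφ'']
      exact φ.map_s_comp_map _ _
  | succ m ih =>
    intro F F' u
    obtain ⟨Fp, A, f, rfl⟩ := precomp_surjective F
    obtain ⟨Fp', A', f', rfl⟩ := precomp_surjective F'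
    obtain ⟨Fp'', s, g, hs, fac⟩ := ih Fp Fp' (δ₀Functor.map u)
    obtain ⟨ψ, hψ⟩ := MorphismProperty.HasRightCalculusOfFractions.exists_rightFraction
      (MorphismProperty.LeftFraction.mk (f : A ⟶ Fp.obj 0) (s.app 0) (hs 0))
    set w : ψ.X' ⟶ A := ψ.s with hw
    set k : ψ.X' ⟶ Fp''.obj 0 := ψ.f with hk
    have hψ' : w ≫ f = k ≫ s.app 0 := hψ
    obtain ⟨φ₂, hφ₂⟩ := Localization.exists_rightFraction W.Q W
      (show W.Q.obj ψ.X' ⟶ W.Q.obj A' from W.Q.map w ≫ u.app 0)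
    set v : φ₂.X' ⟶ ψ.X' := φ₂.s with hv
    set c : φ₂.X' ⟶ A' := φ₂.f with hc
    have hφ₂' : W.Q.map w ≫ u.app 0 = φ₂.map W.Q (Localization.inverts W.Q W) := hφ₂
    have key1 : W.Q.map v ≫ (W.Q.map w ≫ u.app 0) = W.Q.map c := by
      rw [hφ₂']; exact φ₂.map_s_comp_map _ _
    have hnat : u.app 0 ≫ W.Q.map f' = W.Q.map f ≫ u.app 1 := by
      have := u.naturality (homOfLE (show (0 : Fin (m + 2)) ≤ 1 by
        simp [Fin.le_def]))
      exact this.symm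
    have fac0 : W.Q.map (s.app 0) ≫ u.app 1 = W.Q.map (g.app 0) := fac 0
    have key3 : W.Q.map (c ≫ f') = W.Q.map (v ≫ k ≫ g.app 0) := by
      have e1 : W.Q.map w ≫ W.Q.map f = W.Q.map k ≫ W.Q.map (s.app 0) := by
        rw [← W.Q.map_comp, ← W.Q.map_comp, hψ']
        rfl
      simp only [W.Q.map_comp]
      rw [← key1]
      erw [Category.assoc (W.Q.map v), Category.assoc (W.Q.map w)]
      erw [hnat, ← Category.assoc (W.Q.map w), e1, Category.assoc, fac0]
      rfl
    obtain ⟨B', r, hr, hrr⟩ :=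
      (MorphismProperty.map_eq_iff_precomp W.Q W (c ≫ f') (v ≫ k ≫ g.app 0)).1 key3
    refine ⟨Fp''.precomp (r ≫ v ≫ k), homMkSucc (r ≫ v ≫ w) s ?_,
      homMkSucc (r ≫ c) g ?_, ?_, ?_⟩
    · show (r ≫ v ≫ k) ≫ s.app 0 = (r ≫ v ≫ w) ≫ f
      simp only [Category.assoc, ← hψ']
      rfl
    · show (r ≫ v ≫ k) ≫ g.app 0 = (r ≫ c) ≫ f'
      simp only [Category.assoc]
      exact hrr.symm
    · intro i
      obtain ⟨i, hi⟩ := i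
      cases i with
      | zero =>
        exact W.comp_mem _ _ hr (W.comp_mem _ _ φ₂.hs ψ.hs)
      | succ j =>
        exact hs ⟨j, by omega⟩
    · intro i
      obtain ⟨i, hi⟩ := i
      cases i with
      | zero =>
        show W.Q.map (r ≫ v ≫ w) ≫ u.app 0 = W.Q.map (r ≫ c)
        erw [W.Q.map_comp, W.Q.map_comp, W.Q.map_comp, Category.assoc, Category.assoc, key1]
        rfl
      | succ j =>
        exact fac ⟨j, by omega⟩

lemma df_Fin (n : ℕ) (F F' : Fin n ⥤ C) (u : F ⋙ W.Q ⟶ F' ⋙ W.Q) :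
    ∃ (F'' : Fin n ⥤ C) (s : F'' ⟶ F) (g : F'' ⟶ F'),
      (∀ i, W (s.app i)) ∧ ∀ i, W.Q.map (s.app i) ≫ u.app i = W.Q.map (g.app i) := by
  cases n with
  | zero =>
    exact ⟨F, 𝟙 F, ⟨fun i => i.elim0, fun {i} _ _ => i.elim0⟩, fun i => i.elim0,
      fun i => i.elim0⟩
  | succ m => exact df_CA W m F F' u

lemma essSurj_whiskeringRightQ (n : ℕ) :
    ((Functor.whiskeringRight (Fin n) C W.Localization).obj W.Q).EssSurj := by
  cases n with
  | zero =>
    constructor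
    intro X
    exact ⟨⟨fun i => i.elim0, fun {i} _ _ => i.elim0, fun i => i.elim0,
      fun {i} _ _ _ _ => i.elim0⟩, ⟨NatIso.ofComponents (fun i => i.elim0)
        (fun {i} _ _ => i.elim0)⟩⟩
  | succ m =>
    exact Localization.essSurj_mapComposableArrows_of_hasRightCalculusOfFractions W.Q W m

variable {D : Type*} [Category D]

lemma key_nat (n : ℕ) (H₁ H₂ : (Fin n ⥤ W.Localization) ⥤ D)
    (τ : (Functor.whiskeringRight (Fin n) C W.Localization).obj W.Q ⋙ H₁ ⟶
      (Functor.whiskeringRight (Fin n) C W.Localization).obj W.Q ⋙ H₂)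
    (F F' : Fin n ⥤ C)
    (u : ((Functor.whiskeringRight (Fin n) C W.Localization).obj W.Q).obj F ⟶
      ((Functor.whiskeringRight (Fin n) C W.Localization).obj W.Q).obj F') :
    H₁.map u ≫ τ.app F' = τ.app F ≫ H₂.map u := by
  obtain ⟨F'', s, g, hs, fac⟩ := df_Fin W n F F' u
  haveI : ∀ i, IsIso ((((Functor.whiskeringRight (Fin n) C W.Localization).obj W.Q).map s).app i) :=
    fun i => Localization.inverts W.Q W _ (hs i)
  haveI : IsIso (((Functor.whiskeringRight (Fin n) C W.Localization).obj W.Q).map s) :=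
    NatIso.isIso_of_isIso_app _
  refine key_nat_generic _ H₁ H₂ τ u s g ?_
  ext i
  exact fac i

end StmtAux


/-- Lemma `LemA1`: for a multiplicative system `M` in `C` with localisation functor
`L = M.Q : C ⥤ C_M`, for every `n ≥ 0` the induced functor on diagram categories
indexed by the linear poset with `n` elements (postcomposition with `L`) is
1-epimorphic: for every category `D`, precomposition with it is fully faithful. -/
theorem stmt_14 {C : Type*} [Category C] (M : MorphismProperty C)
    (hM : IsMultiplicativeSystem M) (n : ℕ)
    (D : Type*) [Category D] :
    ((Functor.whiskeringLeft (Fin n ⥤ C) (Fin n ⥤ M.Localization) D).obj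
        ((Functor.whiskeringRight (Fin n) C M.Localization).obj M.Q)).Full ∧
    ((Functor.whiskeringLeft (Fin n ⥤ C) (Fin n ⥤ M.Localization) D).obj
        ((Functor.whiskeringRight (Fin n) C M.Localization).obj M.Q)).Faithful := by
  haveI : M.HasRightCalculusOfFractions := hM.hasRightCalculusOfFractions
  haveI := StmtAux.essSurj_whiskeringRightQ M n
  exact StmtAux.full_faithful_of_essSurj_of_key
    ((Functor.whiskeringRight (Fin n) C M.Localization).obj M.Q)
    (fun H₁ H₂ τ F F' u => StmtAux.key_nat M n H₁ H₂ τ F F' u)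
end

section
/- Let C be an additive category and M a multiplicative system in C. Then the localization C_M carries a preadditive structure making it an additive category (it has a zero object and finite biproducts) such that the localization functor L : C ⥤ C_M is an additive functor; moreover, for objects X, Y of C, the object L(X ⊕ Y), together with the images under L of the biproduct inclusions of X and Y, is a biproduct of L X and L Y in C_M. -/
open CategoryTheory

open CategoryTheory.Limits

/-- Remark `RemA2.(2)`: let `C` be an additive category and `M` a multiplicative system
in `C`. Then the localisation `C_M` carries a preadditive structure making it an
additive category (it has a zero object and finite biproducts) such that the
localisation functor `L = M.Q` is additive; moreover, for objects `X, Y` of `C`, the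
object `L (X ⊞ Y)` together with the images under `L` of the biproduct inclusions is a
biproduct (coproduct) of `L X` and `L Y` in `C_M`. -/
theorem stmt_16 {C : Type*} [Category C] [Preadditive C] [HasZeroObject C]
    [HasFiniteBiproducts C]
    (M : MorphismProperty C) (hM : IsMultiplicativeSystem M) :
    ∃ P : Preadditive M.Localization,
      HasZeroObject M.Localization ∧
      (letI := P; HasFiniteBiproducts M.Localization) ∧
      (letI := P; M.Q.Additive) ∧
      (letI : HasBinaryBiproducts C := hasBinaryBiproducts_of_finite_biproducts C
       ∀ X Y : C, Nonempty (IsColimit (BinaryCofan.mk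
        (M.Q.map (biprod.inl : X ⟶ X ⊞ Y)) (M.Q.map (biprod.inr : Y ⟶ X ⊞ Y))))) := by
  -- `M` is multiplicative
  haveI hid : M.ContainsIdentities := ⟨hM.fr1⟩
  haveI hcomp : M.IsStableUnderComposition := ⟨fun f g hf hg => by
    simpa using (hM.fr2 f (𝟙 _) g (by simpa) (by simpa)).2.2.2⟩
  haveI hmult : M.IsMultiplicative := {}
  -- calculi of fractions
  haveI hL : M.HasLeftCalculusOfFractions :=
    { exists_leftFraction := fun X Y φ => by
        obtain ⟨Y', s', f', hs', h⟩ := hM.fr4 φ.s φ.f φ.hs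
        exact ⟨⟨f', s', hs'⟩, h.symm⟩
      ext := fun X' X Y f₁ f₂ s hs h => by
        obtain ⟨Y', t, ht, h'⟩ := (hM.fr3 f₁ f₂).1 ⟨X', s, hs, h⟩
        exact ⟨Y', t, ht, h'⟩ }
  haveI hR : M.HasRightCalculusOfFractions :=
    { exists_rightFraction := fun X Y φ => by
        obtain ⟨X₀, s₀, f₀, hs₀, h⟩ := hM.fr4' φ.f φ.s φ.hs
        exact ⟨⟨s₀, hs₀, f₀⟩, h⟩
      ext := fun X Y Y' f₁ f₂ s hs h => by
        obtain ⟨X', t, ht, h'⟩ := (hM.fr3 f₁ f₂).2 ⟨Y', s, hs, h⟩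
        exact ⟨X', t, ht, h'⟩ }
  haveI : M.Q.EssSurj := Localization.essSurj M.Q M
  haveI : HasBinaryBiproducts C := hasBinaryBiproducts_of_finite_biproducts C
  haveI : PreservesBinaryBiproducts M.Q :=
    preservesBinaryBiproducts_of_preservesBiproducts M.Q
  -- finite products in the localization
  haveI : HasFiniteProducts M.Localization := ⟨fun n => ⟨fun K => by
    let g : Fin n → C := fun j => M.Q.objPreimage (K.obj ⟨j⟩)
    haveI : HasLimit (Discrete.functor fun j => M.Q.obj (g j)) :=
      HasLimit.mk ⟨_, (isBilimitOfPreserves M.Q (biproduct.isBilimit g)).isLimit⟩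
    haveI : HasLimit (Discrete.functor (K.obj ∘ Discrete.mk)) :=
      hasLimit_of_iso (Discrete.natIso (F := Discrete.functor fun j => M.Q.obj (g j)) (fun ⟨j⟩ => M.Q.objObjPreimageIso (K.obj ⟨j⟩)))
    exact hasLimit_of_iso (Discrete.natIsoFunctor (F := K)).symm⟩⟩
  haveI : HasFiniteBiproducts M.Localization := HasFiniteBiproducts.of_hasFiniteProducts
  refine ⟨inferInstance, inferInstance, inferInstance, inferInstance, fun X Y => ?_⟩
  exact ⟨(isBinaryBilimitOfPreserves M.Q (BinaryBiproduct.isBilimit X Y)).isColimit⟩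
end

section
/- Let C be an additive category, M a multiplicative system in C with localization functor L : C ⥤ C_M, and let T be an additive category. Then precomposition with L induces an equivalence from the category of additive functors C_M ⥤ T (with natural transformations as morphisms) to the category of those additive functors C ⥤ T which send every morphism of M to an isomorphism (with natural transformations as morphisms); moreover this equivalence is strictly dense, i.e. surjective on objects, full and faithful. -/
open CategoryTheory CategoryTheory.Limits

variable {C : Type*} [Category C] (M : MorphismProperty C) [Preadditive C]
  {T : Type*} [Category T] [Preadditive T]
  [Preadditive M.Localization] [M.Q.Additive]

/-- The functor given by precomposition with the localisation functor `M.Q`, from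
additive functors `C_M ⥤+ T` to the full subcategory of those additive functors
`C ⥤+ T` which send every morphism of `M` to an isomorphism. -/
noncomputable def precompQ :
    (M.Localization ⥤+ T) ⥤
      ObjectProperty.FullSubcategory (fun F : C ⥤+ T => M.IsInvertedBy F.obj) where
  obj G :=
    ⟨⟨M.Q ⋙ G.obj, by have : G.obj.Additive := G.property; exact (inferInstance : (M.Q ⋙ G.obj).Additive)⟩,
      fun X Y f hf => by
        have : IsIso (M.Q.map f) := Localization.inverts M.Q M f hf
        dsimp
        infer_instance⟩
  map {G G'} φ := ObjectProperty.homMk (ObjectProperty.homMk (Functor.whiskerLeft M.Q φ.hom))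


lemma IsMultiplicativeSystem.hasLeftCalculusOfFractions {C : Type*} [Category C]
    {M : MorphismProperty C} (hM : IsMultiplicativeSystem M) :
    M.HasLeftCalculusOfFractions where
  id_mem := hM.fr1
  comp_mem {X Y Z} f g hf hg := by
    have := hM.fr2 f (𝟙 Y) g (by simpa using hf) (by simpa using hg)
    simpa using this.2.2.2
  exists_leftFraction {X Y} φ := by
    obtain ⟨Y', s', f', hs', fac⟩ := hM.fr4 φ.s φ.f φ.hs
    exact ⟨⟨f', s', hs'⟩, fac.symm⟩
  ext {X' X Y} f₁ f₂ s hs h := by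
    obtain ⟨Y', t, ht, h'⟩ := (hM.fr3 f₁ f₂).1 ⟨X', s, hs, h⟩
    exact ⟨Y', t, ht, h'⟩

lemma fullSubcategory_ext {D : Type*} [Category D] {P : D → Prop}
    {X Y : ObjectProperty.FullSubcategory P} (h : X.obj = Y.obj) : X = Y := by
  cases X; cases Y; cases h; rfl

/-- Remark `RemA2.(3)`: let `C` be an additive category, `M` a multiplicative system in
`C` with localisation functor `L = M.Q`, and `T` an additive category. Precomposition
with `L` induces an equivalence from the category of additive functors `C_M ⥤+ T` to
the category of those additive functors `C ⥤+ T` which invert every morphism of `M`;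
moreover this equivalence is strictly dense (surjective on objects), full and
faithful. -/
theorem stmt_17 [HasZeroObject C] [HasFiniteBiproducts C]
    (hM : IsMultiplicativeSystem M) :
    (precompQ M (T := T)).IsEquivalence ∧
    (precompQ M (T := T)).Full ∧ (precompQ M (T := T)).Faithful ∧
    Function.Surjective (precompQ M (T := T)).obj := by
  have := hM.hasLeftCalculusOfFractions
  have hfaith : (precompQ M (T := T)).Faithful := by
    constructor
    intro G G' φ ψ h
    apply ObjectProperty.hom_ext
    apply CategoryTheory.Localization.Construction.natTrans_hcomp_injective
    ext X
    have := congr_app (congrArg (fun f => f.hom.hom) h) X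
    simp only [NatTrans.hcomp_app, NatTrans.id_app, Functor.map_id]
    have h2 : φ.hom.app (M.Q.obj X) = ψ.hom.app (M.Q.obj X) := this
    simpa using h2
  have hfull : (precompQ M (T := T)).Full := by
    constructor
    intro G G' τ
    refine ⟨ObjectProperty.homMk (CategoryTheory.Localization.Construction.natTransExtension τ.hom.hom), ?_⟩
    apply ObjectProperty.hom_ext
    apply ObjectProperty.hom_ext
    exact NatTrans.ext (funext fun X =>
      CategoryTheory.Localization.Construction.NatTransExtension.app_eq τ.hom.hom X)
  have hsurj : Function.Surjective (precompQ M (T := T)).obj := by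
    rintro ⟨⟨F, hadd⟩, hF⟩
    let G := CategoryTheory.Localization.Construction.lift F hF
    have fac : M.Q ⋙ G = F := CategoryTheory.Localization.Construction.fac F hF
    have hGadd : G.Additive := by
      rw [CategoryTheory.Localization.functor_additive_iff M.Q M G, fac]
      exact hadd
    exact ⟨⟨G, hGadd⟩, fullSubcategory_ext (fullSubcategory_ext fac)⟩
  have hess : (precompQ M (T := T)).EssSurj :=
    ⟨fun Y => ⟨(hsurj Y).choose, ⟨eqToIso (hsurj Y).choose_spec⟩⟩⟩
  exact ⟨{}, hfull, hfaith, hsurj⟩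
end
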